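/- arXiv:0910.2401 — 10 statements merged into one kernel-verified Lean document; each statement's English description precedes it below -/
import Mathlib

section
/- Let C be a cartesian closed category with a dualizing object ⊥, i.e. an object ⊥ such that for every object A the canonical morphism A ⟶ ((A ⇨ ⊥) ⇨ ⊥) (the transpose under the exponential adjunction of the evaluation morphism (A ⇨ ⊥) ⨯ A ⟶ ⊥) is an isomorphism. Then C is a preorder: for all objects A, B and all morphisms f, g : A ⟶ B we have f = g. (Joyal's Lemma) -/
open CategoryTheory CategoryTheory.Limits MonoidalCategory CartesianClosed

universe v u

/-- **Joyal's Lemma.** A cartesian closed category with a dualizing object `bot`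
(i.e. the canonical morphism `A ⟶ ((A ⇨ bot) ⇨ bot)`, obtained by currying the
evaluation morphism composed with the symmetry of the product, is an isomorphism
for every `A`) is a preorder: any two parallel morphisms are equal. -/
theorem joyal_lemma (C : Type u) [Category.{v} C] [CartesianMonoidalCategory C] [MonoidalClosed C]
    (bot : C)
    (dualizing : ∀ A : C,
      letI : BraidedCategory C := .ofCartesianMonoidalCategory
      IsIso (MonoidalClosed.curry ((β_ (A ⟹ bot) A).hom ≫ (ihom.ev A).app bot)))
    {A B : C} (f g : A ⟶ B) : f = g := by
  classical
  letI : BraidedCategory C := .ofCartesianMonoidalCategory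
  open CartesianClosed in
  -- the canonical double-dualization morphism
  have hη := dualizing
  set η : ∀ A : C, A ⟶ ((A ⟹ bot) ⟹ bot) := fun A =>
    MonoidalClosed.curry ((β_ (A ⟹ bot) A).hom ≫ (ihom.ev A).app bot) with hηdef
  haveI : ∀ A : C, IsIso (η A) := hη
  -- Step 1: hom equivalence (¬1 ⟶ Y) ≃ (¬Y ⟶ 1)
  have e : ∀ Y : C, ((𝟙_ C ⟹ bot) ⟶ Y) ≃ ((Y ⟹ bot) ⟶ 𝟙_ C) := fun Y =>
    calc ((𝟙_ C ⟹ bot) ⟶ Y)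
        ≃ ((𝟙_ C ⟹ bot) ⟶ ((Y ⟹ bot) ⟹ bot)) := Iso.homCongr (Iso.refl _) (asIso (η Y))
      _ ≃ ((Y ⟹ bot) ⊗ (𝟙_ C ⟹ bot) ⟶ bot) := ((ihom.adjunction _).homEquiv _ _).symm
      _ ≃ ((𝟙_ C ⟹ bot) ⊗ (Y ⟹ bot) ⟶ bot) :=
          Iso.homCongr (β_ ((Y ⟹ bot)) ((𝟙_ C ⟹ bot))) (Iso.refl _)
      _ ≃ ((Y ⟹ bot) ⟶ ((𝟙_ C ⟹ bot) ⟹ bot)) := (ihom.adjunction _).homEquiv _ _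
      _ ≃ ((Y ⟹ bot) ⟶ 𝟙_ C) := Iso.homCongr (Iso.refl _) (asIso (η (𝟙_ C))).symm
  -- Step 2: ¬1 is initial
  have hinit : IsInitial (𝟙_ C ⟹ bot) :=
    IsInitial.ofUniqueHom (fun Y => (e Y).symm (CartesianMonoidalCategory.toUnit _))
      (fun Y m => by
        apply (e Y).injective
        simp only [Equiv.apply_symm_apply]
        exact CartesianMonoidalCategory.toUnit_unique _ _)
  -- Step 3: in a CCC an initial object is strict, so homs into it are unique
  have hsub : ∀ (Z : C) (u v : Z ⟶ (𝟙_ C ⟹ bot)), u = v := by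
    intro Z u v
    haveI := strict_initial hinit u
    exact (IsInitial.ofIso hinit (asIso u).symm).hom_ext u v
  -- Step 4: homs into `bot` are unique
  have hsub' : ∀ (Z : C) (u v : Z ⟶ bot), u = v := by
    intro Z u v
    have h := hsub Z (MonoidalClosed.curry ((λ_ Z).hom ≫ u))
      (MonoidalClosed.curry ((λ_ Z).hom ≫ v))
    have h2 := MonoidalClosed.curry_injective h
    rwa [cancel_epi] at h2
  -- Step 5: conclude
  have key : f ≫ η B = g ≫ η B := by
    rw [hηdef]
    rw [← MonoidalClosed.curry_natural_left, ← MonoidalClosed.curry_natural_left]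
    exact congrArg _ (hsub' _ _ _)
  haveI := hη B
  exact (cancel_mono (η B)).1 key
end

section
/- Let C be a cartesian closed category and ⊥ a dualizing object of C, i.e. for every object A the canonical morphism A ⟶ ((A ⇨ ⊥) ⇨ ⊥) is an isomorphism. Then ⊥ is an initial object of C. -/
open CategoryTheory CategoryTheory.Limits MonoidalCategory

open scoped CategoryTheory.CartesianClosed

universe v u

/-- In a cartesian closed category, a dualizing object `bot` (i.e. the canonical
morphism `A ⟶ ((A ⇨ bot) ⇨ bot)` is an isomorphism for every `A`) is an initial
object. -/
theorem dualizing_isInitial (C : Type u) [Category.{v} C] [CartesianMonoidalCategory C]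
    [MonoidalClosed C] (bot : C)
    (dualizing : ∀ A : C,
      letI := BraidedCategory.ofCartesianMonoidalCategory (C := C)
      IsIso (MonoidalClosed.curry ((β_ (A ⟹ bot) A).hom ≫ (ihom.ev A).app bot))) :
    Nonempty (IsInitial bot) := by
  letI := BraidedCategory.ofCartesianMonoidalCategory (C := C)
  open CartesianClosed in
  -- the canonical double-dualization map
  set d : ∀ A : C, A ⟶ (A ⟹ bot) ⟹ bot :=
    fun A => MonoidalClosed.curry ((β_ (A ⟹ bot) A).hom ≫ (ihom.ev A).app bot) with hd
  haveI : ∀ A : C, IsIso (d A) := dualizing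
  -- `bot ⟹ bot` is isomorphic to `(𝟙_ C ⟹ bot) ⟹ bot`
  have u : ((𝟙_ C) ⟹ bot) ≅ bot := (MonoidalClosed.unitNatIso.app bot).symm
  have E₁ : (bot ⟹ bot) ≅ (((𝟙_ C) ⟹ bot) ⟹ bot) :=
    { hom := (MonoidalClosed.pre u.hom).app bot
      inv := (MonoidalClosed.pre u.inv).app bot
      hom_inv_id := by
        rw [← NatTrans.comp_app, ← MonoidalClosed.pre_map, Iso.inv_hom_id, MonoidalClosed.pre_id, NatTrans.id_app]
      inv_hom_id := by
        rw [← NatTrans.comp_app, ← MonoidalClosed.pre_map, Iso.hom_inv_id, MonoidalClosed.pre_id, NatTrans.id_app] }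
  -- hence `bot ⟹ bot ≅ 𝟙_ C`, so all maps into `bot ⟹ bot` agree
  have E : (bot ⟹ bot) ≅ 𝟙_ C := E₁ ≪≫ (asIso (d (𝟙_ C))).symm
  have key : ∀ (X : C) (g₁ g₂ : X ⟶ bot ⟹ bot), g₁ = g₂ := by
    intro X g₁ g₂
    have h1 : g₁ ≫ E.hom = g₂ ≫ E.hom := CartesianMonoidalCategory.toUnit_unique _ _
    calc g₁ = (g₁ ≫ E.hom) ≫ E.inv := by simp
    _ = (g₂ ≫ E.hom) ≫ E.inv := by rw [h1]
    _ = g₂ := by simp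
  refine ⟨IsInitial.ofUniqueHom
    (fun A => MonoidalClosed.curry (CartesianMonoidalCategory.snd _ _) ≫ inv (d A)) ?_⟩
  intro A m
  -- uniqueness: both maps become maps `(A ⟹ bot) ⟶ bot ⟹ bot` after transposing
  have inj : ∀ f g : bot ⟶ A,
      MonoidalClosed.curry ((β_ bot (A ⟹ bot)).hom ≫ MonoidalClosed.uncurry (f ≫ d A)) =
      MonoidalClosed.curry ((β_ bot (A ⟹ bot)).hom ≫ MonoidalClosed.uncurry (g ≫ d A)) →
      f = g := by
    intro f g h
    have h2 := MonoidalClosed.curry_injective h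
    rw [cancel_epi] at h2
    have h3 := MonoidalClosed.uncurry_injective h2
    rwa [cancel_mono] at h3
  exact inj _ _ (key _ _ _)
end

section
/- Let C be a cartesian closed category and ⊥ a dualizing object of C, i.e. for every object A the canonical morphism A ⟶ ((A ⇨ ⊥) ⇨ ⊥) is an isomorphism. Then the contravariant functor A ↦ (A ⇨ ⊥) is an equivalence between C and its opposite category Cᵒᵖ. -/
open CategoryTheory CategoryTheory.Limits MonoidalCategory
open scoped CategoryTheory.CartesianClosed

attribute [local instance] CategoryTheory.BraidedCategory.ofCartesianMonoidalCategory

universe v u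

/-- The contravariant "negation" functor `A ↦ (A ⇨ bot)` of a cartesian closed
category, regarded as a (covariant) functor `C ⥤ Cᵒᵖ`.  On morphisms it acts by
precomposition under the exponential adjunction. -/
noncomputable def negationFunctor (C : Type u) [Category.{v} C] [CartesianMonoidalCategory C]
    [MonoidalClosed C] (bot : C) : C ⥤ Cᵒᵖ where
  obj A := Opposite.op (A ⟹ bot)
  map f := ((MonoidalClosed.pre f).app bot).op
  map_id A := by simp
  map_comp f g := by simp

variable {C : Type u} [Category.{v} C] [CartesianMonoidalCategory C] [MonoidalClosed C]

/-- The canonical double-negation morphism. -/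
noncomputable def dneg (bot A : C) : A ⟶ ((A ⟹ bot) ⟹ bot) :=
  MonoidalClosed.curry ((β_ (A ⟹ bot) A).hom ≫ (ihom.ev A).app bot)

/-- The "un-opped" negation functor `Cᵒᵖ ⥤ C`. -/
noncomputable def negationFunctorUnop (bot : C) : Cᵒᵖ ⥤ C where
  obj X := X.unop ⟹ bot
  map f := (MonoidalClosed.pre f.unop).app bot
  map_id X := by simp
  map_comp f g := by simp

lemma dneg_natural (bot : C) {A B : C} (f : A ⟶ B) :
    f ≫ dneg bot B =
      dneg bot A ≫ (MonoidalClosed.pre ((MonoidalClosed.pre f).app bot)).app bot := by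
  apply MonoidalClosed.uncurry_injective
  rw [MonoidalClosed.uncurry_natural_left, MonoidalClosed.uncurry_natural_left]
  rw [dneg, dneg, MonoidalClosed.uncurry_curry]
  rw [MonoidalClosed.uncurry_pre]
  have h1 : ((B ⟹ bot) ◁ f) ≫ (β_ (B ⟹ bot) B).hom
      = (β_ (B ⟹ bot) A).hom ≫ (f ▷ (B ⟹ bot)) := by
    simp
  have h2 : ((B ⟹ bot) ◁ MonoidalClosed.curry ((β_ (A ⟹ bot) A).hom ≫ (ihom.ev A).app bot))
      ≫ (((MonoidalClosed.pre f).app bot) ▷ ((A ⟹ bot) ⟹ bot))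
      = (((MonoidalClosed.pre f).app bot) ▷ A) ≫
        ((A ⟹ bot) ◁ MonoidalClosed.curry ((β_ (A ⟹ bot) A).hom ≫ (ihom.ev A).app bot)) :=
    whisker_exchange _ _
  slice_rhs 1 2 => rw [h2]
  slice_lhs 1 2 => rw [h1]
  have h3 : ((A ⟹ bot) ◁ MonoidalClosed.curry ((β_ (A ⟹ bot) A).hom ≫ (ihom.ev A).app bot))
      ≫ (ihom.ev (A ⟹ bot)).app bot
      = (β_ (A ⟹ bot) A).hom ≫ (ihom.ev A).app bot :=
    (MonoidalClosed.uncurry_eq _).symm.trans (MonoidalClosed.uncurry_curry _)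
  slice_rhs 2 3 => rw [h3]
  have h4 : (((MonoidalClosed.pre f).app bot) ▷ A) ≫ (β_ (A ⟹ bot) A).hom
      = (β_ (B ⟹ bot) A).hom ≫ (A ◁ (MonoidalClosed.pre f).app bot) := by
    simp
  slice_rhs 1 2 => rw [h4]
  rw [Category.assoc, Category.assoc, MonoidalClosed.id_tensor_pre_app_comp_ev]

/-- If `bot` is a dualizing object of a cartesian closed category `C`, then the
negation functor `A ↦ (A ⇨ bot)` is an equivalence between `C` and `Cᵒᵖ`. -/
theorem negationFunctor_isEquivalence (C : Type u) [Category.{v} C] [CartesianMonoidalCategory C]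
    [MonoidalClosed C] (bot : C)
    (dualizing : ∀ A : C,
      IsIso (MonoidalClosed.curry ((β_ (A ⟹ bot) A).hom ≫ (ihom.ev A).app bot))) :
    (negationFunctor C bot).IsEquivalence := by
  have hiso : ∀ A : C, IsIso (dneg bot A) := dualizing
  let e : C ≌ Cᵒᵖ :=
    CategoryTheory.Equivalence.mk (negationFunctor C bot) (negationFunctorUnop bot)
      (NatIso.ofComponents (fun A => @asIso _ _ _ _ _ (hiso A)) (by
        intro A B f
        exact dneg_natural bot f))
      (NatIso.ofComponents (fun X => (@asIso _ _ _ _ _ (hiso X.unop)).op) (by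
        intro X Y φ
        apply Quiver.Hom.unop_inj
        simp only [Functor.comp_map, Functor.id_map, unop_comp, Quiver.Hom.unop_op]
        exact (dneg_natural bot φ.unop).symm))
  exact e.isEquivalence_functor
end

section
/- Let C be a category with chosen finite products, regarded as a symmetric monoidal category with tensor the binary product and unit the terminal object. If this monoidal category is compact closed (every object A has a dual Aᘁ with coevaluation η_A : I ⟶ A ⊗ Aᘁ and evaluation ε_A : Aᘁ ⊗ A ⟶ I satisfying the triangle identities), then C is a preorder: for all objects A, B and all morphisms f, g : A ⟶ B we have f = g. -/
open CategoryTheory CategoryTheory.Limits MonoidalCategory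

universe v u

/-- If a category with chosen finite products, regarded as a symmetric monoidal
category with tensor the binary product and unit the terminal object, is compact
closed (every object has a right dual, i.e. a coevaluation `η_A : I ⟶ A ⊗ Aᘁ` and an
evaluation `ε_A : Aᘁ ⊗ A ⟶ I` satisfying the triangle identities), then the category
is a preorder: any two parallel morphisms are equal. -/
theorem cartesian_compact_closed_preorder (C : Type u) [Category.{v} C]
    [CartesianMonoidalCategory C] [RightRigidCategory C]
    {A B : C} (f g : A ⟶ B) : f = g := by
  have key : ∀ X : C, 𝟙 X = CartesianMonoidalCategory.toUnit X ≫
      (η_ X Xᘁ ≫ CartesianMonoidalCategory.fst X Xᘁ) := by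
    intro X
    have h := ExactPairing.evaluation_coevaluation X Xᘁ
    have h2 : (λ_ X).inv ≫ (η_ X Xᘁ ▷ X ≫ (α_ X Xᘁ X).hom ≫ X ◁ ε_ X Xᘁ) ≫ (ρ_ X).hom
        = 𝟙 X := by
      rw [h]; simp only [Category.assoc, Iso.inv_hom_id, Category.comp_id, Iso.inv_hom_id_assoc]
    rw [← h2]
    have hρ : (ρ_ X).hom = CartesianMonoidalCategory.fst X (𝟙_ C) := by
      rw [← Category.id_comp (CartesianMonoidalCategory.fst X (𝟙_ C)), ← Iso.hom_inv_id (ρ_ X),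
        Category.assoc, CartesianMonoidalCategory.rightUnitor_inv_fst, Category.comp_id]
    slice_lhs 4 5 => rw [hρ, CartesianMonoidalCategory.whiskerLeft_fst]
    slice_lhs 3 4 => rw [CartesianMonoidalCategory.associator_hom_fst]
    slice_lhs 2 3 => rw [CartesianMonoidalCategory.whiskerRight_fst]
    slice_lhs 1 2 => rw [CartesianMonoidalCategory.leftUnitor_inv_fst]
    simp [CartesianMonoidalCategory.toUnit_unique (CartesianMonoidalCategory.fst _ _)
      (CartesianMonoidalCategory.toUnit _)]
  have hf : f = CartesianMonoidalCategory.toUnit A ≫ (η_ B Bᘁ ≫ CartesianMonoidalCategory.fst B Bᘁ) := by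
    rw [show f = f ≫ 𝟙 B from (Category.comp_id f).symm, key B, ← Category.assoc,
      CartesianMonoidalCategory.toUnit_unique (f ≫ CartesianMonoidalCategory.toUnit B)
        (CartesianMonoidalCategory.toUnit A)]
  have hg : g = CartesianMonoidalCategory.toUnit A ≫ (η_ B Bᘁ ≫ CartesianMonoidalCategory.fst B Bᘁ) := by
    rw [show g = g ≫ 𝟙 B from (Category.comp_id g).symm, key B, ← Category.assoc,
      CartesianMonoidalCategory.toUnit_unique (g ≫ CartesianMonoidalCategory.toUnit B)
        (CartesianMonoidalCategory.toUnit A)]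
  rw [hf, hg]
end

section
/- Let C be a symmetric monoidal category equipped with natural transformations Δ_A : A ⟶ A ⊗ A, p_{A,B} : A ⊗ B ⟶ A, q_{A,B} : A ⊗ B ⟶ B (natural in all variables) such that for every object A, Δ_A ≫ p_{A,A} = 𝟙_A and Δ_A ≫ q_{A,A} = 𝟙_A, and for all objects A, B, Δ_{A⊗B} ≫ (p_{A,B} ⊗ q_{A,B}) = 𝟙_{A⊗B}. Then for all objects A, B, the object A ⊗ B together with the projections p_{A,B} and q_{A,B} is a categorical binary product of A and B. -/
open CategoryTheory CategoryTheory.Limits MonoidalCategory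

universe v u

/-- In a symmetric monoidal category equipped with natural diagonals
`Δ_A : A ⟶ A ⊗ A` and natural projections `p_{A,B} : A ⊗ B ⟶ A`,
`q_{A,B} : A ⊗ B ⟶ B` satisfying `Δ_A ≫ p_{A,A} = 𝟙_A`, `Δ_A ≫ q_{A,A} = 𝟙_A`
and `Δ_{A⊗B} ≫ (p_{A,B} ⊗ q_{A,B}) = 𝟙_{A⊗B}`, the tensor `A ⊗ B` together with
`p_{A,B}` and `q_{A,B}` is a categorical binary product of `A` and `B`. -/
theorem tensor_isBinaryProduct (C : Type u) [Category.{v} C] [MonoidalCategory C]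
    [SymmetricCategory C]
    (Δ : ∀ A : C, A ⟶ A ⊗ A)
    (p : ∀ A B : C, A ⊗ B ⟶ A) (q : ∀ A B : C, A ⊗ B ⟶ B)
    (Δ_nat : ∀ {A B : C} (f : A ⟶ B), f ≫ Δ B = Δ A ≫ (f ⊗ₘ f))
    (p_nat : ∀ {A A' B B' : C} (f : A ⟶ A') (g : B ⟶ B'),
      (f ⊗ₘ g) ≫ p A' B' = p A B ≫ f)
    (q_nat : ∀ {A A' B B' : C} (f : A ⟶ A') (g : B ⟶ B'),
      (f ⊗ₘ g) ≫ q A' B' = q A B ≫ g)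
    (hp : ∀ A : C, Δ A ≫ p A A = 𝟙 A)
    (hq : ∀ A : C, Δ A ≫ q A A = 𝟙 A)
    (hpq : ∀ A B : C, Δ (A ⊗ B) ≫ (p A B ⊗ₘ q A B) = 𝟙 (A ⊗ B))
    (A B : C) :
    Nonempty (IsLimit (BinaryFan.mk (p A B) (q A B))) := by
  refine ⟨BinaryFan.isLimitMk (fun s => Δ s.pt ≫ (s.fst ⊗ₘ s.snd)) ?_ ?_ ?_⟩
  · intro s
    erw [Category.assoc, p_nat, ← Category.assoc, hp, Category.id_comp]
  · intro s
    erw [Category.assoc, q_nat, ← Category.assoc, hq, Category.id_comp]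
  · intro s m h1 h2
    have : m ≫ Δ (A ⊗ B) ≫ (p A B ⊗ₘ q A B) = Δ s.pt ≫ (m ⊗ₘ m) ≫ (p A B ⊗ₘ q A B) := by
      rw [← Category.assoc, Δ_nat, Category.assoc]
    rw [hpq, Category.comp_id, tensorHom_comp_tensorHom, h1, h2] at this
    exact this
end

section
/- Let C be a symmetric monoidal category with uniform cloning Δ. Then composition of scalars is idempotent: for every scalar s : I ⟶ I, s ≫ s = s. -/
open CategoryTheory MonoidalCategory

universe v u

/-- A *uniform cloning* operation on a symmetric monoidal category: a monoidal
natural transformation `Δ` from the identity functor to the functor `A ↦ A ⊗ A`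
which is coassociative and cocommutative. -/
structure UniformCloning (C : Type u) [Category.{v} C] [MonoidalCategory C]
    [SymmetricCategory C] where
  /-- The components `Δ_A : A ⟶ A ⊗ A`. -/
  Δ : ∀ A : C, A ⟶ A ⊗ A
  /-- Naturality: `f ≫ Δ_B = Δ_A ≫ (f ⊗ f)`. -/
  naturality : ∀ {A B : C} (f : A ⟶ B), f ≫ Δ B = Δ A ≫ (f ⊗ₘ f)
  /-- Monoidality at the unit: `Δ_I = λ_I⁻¹`. -/
  unit : Δ (𝟙_ C) = (λ_ (𝟙_ C)).inv
  /-- Monoidality at tensor products: `Δ_{A⊗B}` is `Δ_A ⊗ Δ_B` followed by the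
  middle-interchange isomorphism built from associators and the symmetry. -/
  tensor : ∀ A B : C, Δ (A ⊗ B) = (Δ A ⊗ₘ Δ B) ≫ tensorμ A A B B
  /-- Coassociativity (up to the associator). -/
  coassoc : ∀ A : C, Δ A ≫ (𝟙 A ⊗ₘ Δ A) = Δ A ≫ (Δ A ⊗ₘ 𝟙 A) ≫ (α_ A A A).hom
  /-- Cocommutativity: `Δ_A ≫ σ_{A,A} = Δ_A`. -/
  cocomm : ∀ A : C, Δ A ≫ (β_ A A).hom = Δ A

/-- In a symmetric monoidal category with uniform cloning, composition of scalars
is idempotent: `s ≫ s = s` for every scalar `s : I ⟶ I`. -/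
theorem scalars_idempotent_of_cloning (C : Type u) [Category.{v} C] [MonoidalCategory C]
    [SymmetricCategory C] (cloning : UniformCloning C)
    (s : 𝟙_ C ⟶ 𝟙_ C) : s ≫ s = s := by
  have h := cloning.naturality s
  rw [cloning.unit] at h
  have h2 : s = (λ_ (𝟙_ C)).inv ≫ (s ⊗ₘ s) ≫ (λ_ (𝟙_ C)).hom := by
    rw [← Category.assoc, ← h]; simp
  conv_rhs => rw [h2]
  have hu : (λ_ (𝟙_ C)) = ρ_ (𝟙_ C) := Iso.ext unitors_equal
  simp [MonoidalCategory.tensorHom_def, hu]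
end

section
/- Let C be a symmetric monoidal category with uniform cloning Δ. Then for every morphism u : I ⟶ A ⊗ B, the morphism u ⊗ u : I ⊗ I ⟶ (A ⊗ B) ⊗ (A ⊗ B) satisfies u ⊗ u = (u ⊗ u) ≫ P, where P : (A ⊗ B) ⊗ (A ⊗ B) ⟶ (A ⊗ B) ⊗ (A ⊗ B) is the permutation isomorphism, built from associators and symmetries, that exchanges the first and third tensor factors of A ⊗ B ⊗ A ⊗ B (the permutation (3 2 1 4)). -/
open CategoryTheory MonoidalCategory

universe v u

lemma symm_tensorμ_eq_tensorδ (C : Type u) [Category.{v} C] [MonoidalCategory C]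
    [SymmetricCategory C] (A B : C) :
    tensorμ A B A B = tensorδ A A B B := by
  simp [tensorμ, tensorδ, SymmetricCategory.symmetry_assoc,
    ← SymmetricCategory.braiding_swap_eq_inv_braiding]

/-- In a symmetric monoidal category with uniform cloning, for every morphism
`u : I ⟶ A ⊗ B` we have "parallel caps = crossed caps": `u ⊗ u` is unchanged by
the permutation isomorphism, built from associators and symmetries, exchanging
the first and third tensor factors of `A ⊗ B ⊗ A ⊗ B` (the permutation (3 2 1 4)). -/
theorem tensor_self_symm_of_cloning (C : Type u) [Category.{v} C] [MonoidalCategory C]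
    [SymmetricCategory C] (cloning : UniformCloning C)
    {A B : C} (u : 𝟙_ C ⟶ A ⊗ B) :
    u ⊗ₘ u = (u ⊗ₘ u) ≫
      (tensorμ A B A B ≫ ((β_ A A).hom ⊗ₘ 𝟙 (B ⊗ B)) ≫ tensorμ A A B B) := by
  have h : u ⊗ₘ u = (λ_ (𝟙_ C)).hom ≫ u ≫ (cloning.Δ A ⊗ₘ cloning.Δ B) ≫ tensorμ A A B B := by
    have := cloning.naturality u
    rw [cloning.unit, cloning.tensor] at this
    rw [this]
    simp
  rw [h]
  simp only [Category.assoc, symm_tensorμ_eq_tensorδ, tensorμ_tensorδ_assoc]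
  rw [tensorHom_comp_tensorHom_assoc, cloning.cocomm, Category.comp_id]
end

section
/- Let C be a compact closed category with uniform cloning Δ. Then for every object A the twist map equals the identity: σ_{A,A} = 𝟙_{A⊗A}, where σ is the symmetry of the monoidal structure. -/
open CategoryTheory MonoidalCategory

universe v u

namespace UniformCloningAux

open BraidedCategory

set_option maxHeartbeats 1000000

variable {C : Type u} [Category.{v} C] [MonoidalCategory C] [SymmetricCategory C]
  [RightRigidCategory C]

/-- The key consequence of cloning applied to the coevaluation. -/
theorem keyK (cloning : UniformCloning C) (A : C) :
    (η_ A Aᘁ ⊗ₘ η_ A Aᘁ) ≫ tensorδ A A Aᘁ Aᘁ ≫ ((β_ A A).hom ⊗ₘ 𝟙 (Aᘁ ⊗ Aᘁ)) =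
      (η_ A Aᘁ ⊗ₘ η_ A Aᘁ) ≫ tensorδ A A Aᘁ Aᘁ := by
  have h1 := cloning.naturality (η_ A Aᘁ)
  rw [cloning.tensor, cloning.unit] at h1
  have hN := congrArg (fun t => t ≫ tensorδ A A Aᘁ Aᘁ) h1
  simp only [Category.assoc, tensorμ_tensorδ, Category.comp_id] at hN
  have h0 : (cloning.Δ A ⊗ₘ cloning.Δ Aᘁ) ≫ ((β_ A A).hom ⊗ₘ 𝟙 (Aᘁ ⊗ Aᘁ)) =
      (cloning.Δ A ⊗ₘ cloning.Δ Aᘁ) := by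
    rw [tensorHom_comp_tensorHom, Category.comp_id, cloning.cocomm]
  have h2 := congrArg (fun t => η_ A Aᘁ ≫ t) h0
  simp only [← Category.assoc] at h2
  rw [hN] at h2
  simp only [Category.assoc] at h2
  exact ((Iso.cancel_iso_inv_left (λ_ (𝟙_ C)) _ _).mp h2)

/-- The partially unbent morphism associated to `g : A ⊗ A ⟶ A ⊗ A`. -/
noncomputable def Pmap (A : C) (g : A ⊗ A ⟶ A ⊗ A) : A ⟶ (A ⊗ A) ⊗ Aᘁ :=
  (λ_ A).inv ≫ (η_ A Aᘁ ▷ A) ≫ (α_ A Aᘁ A).hom ≫ (A ◁ (β_ A Aᘁ).inv) ≫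
    (α_ A A Aᘁ).inv ≫ (g ▷ Aᘁ)

theorem C1 (A : C) (g : A ⊗ A ⟶ A ⊗ A) :
    (λ_ (𝟙_ C)).inv ≫ (η_ A Aᘁ ⊗ₘ η_ A Aᘁ) ≫ tensorδ A A Aᘁ Aᘁ ≫ (g ▷ (Aᘁ ⊗ Aᘁ)) ≫
      (α_ (A ⊗ A) Aᘁ Aᘁ).inv = η_ A Aᘁ ≫ (Pmap A g ▷ Aᘁ) := by
  dsimp [Pmap, tensorδ]
  rw [tensorHom_def']
  simp only [MonoidalCategory.comp_whiskerRight, Category.assoc]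
  monoidal

theorem C2 (A : C) (g : A ⊗ A ⟶ A ⊗ A) :
    Pmap A g = tensorRightHomEquiv A A Aᘁ (A ⊗ A) ((β_ A A).inv ≫ g) := by
  dsimp [Pmap, tensorRightHomEquiv]
  rw [← SymmetricCategory.braiding_swap_eq_inv_braiding]
  have E : η_ A Aᘁ ▷ A ≫ (α_ A Aᘁ A).hom ≫ A ◁ (β_ Aᘁ A).hom ≫ (α_ A A Aᘁ).inv =
      (β_ (𝟙_ C) A).hom ≫ A ◁ η_ A Aᘁ ≫ (α_ A A Aᘁ).inv ≫ (β_ A A).inv ▷ Aᘁ := by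
    rw [← cancel_mono ((β_ A A).hom ▷ Aᘁ), ← cancel_mono ((α_ A A Aᘁ).hom)]
    have nat := braiding_naturality_left (η_ A Aᘁ) A
    rw [braiding_tensor_left_hom] at nat
    simp only [Category.assoc, inv_hom_whiskerRight, Category.comp_id,
      inv_hom_whiskerRight_assoc, Iso.inv_hom_id, Iso.inv_hom_id_assoc]
    simpa [Category.assoc] using nat
  calc (λ_ A).inv ≫ η_ A Aᘁ ▷ A ≫ (α_ A Aᘁ A).hom ≫ A ◁ (β_ Aᘁ A).hom ≫ (α_ A A Aᘁ).inv ≫ g ▷ Aᘁ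
      = (λ_ A).inv ≫ (η_ A Aᘁ ▷ A ≫ (α_ A Aᘁ A).hom ≫ A ◁ (β_ Aᘁ A).hom ≫ (α_ A A Aᘁ).inv) ≫
          g ▷ Aᘁ := by simp only [Category.assoc]
    _ = (λ_ A).inv ≫ ((β_ (𝟙_ C) A).hom ≫ A ◁ η_ A Aᘁ ≫ (α_ A A Aᘁ).inv ≫ (β_ A A).inv ▷ Aᘁ) ≫
          g ▷ Aᘁ := by rw [E]
    _ = (ρ_ A).inv ≫ A ◁ η_ A Aᘁ ≫ (α_ A A Aᘁ).inv ≫ ((β_ A A).inv ≫ g) ▷ Aᘁ := by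
        rw [← leftUnitor_inv_braiding]
        simp only [Category.assoc, MonoidalCategory.comp_whiskerRight]

theorem main (cloning : UniformCloning C) (A : C) : (β_ A A).hom = 𝟙 (A ⊗ A) := by
  have K := keyK cloning A
  have K' := congrArg
    (fun t => (λ_ (𝟙_ C)).inv ≫ t ≫ (α_ (A ⊗ A) Aᘁ Aᘁ).inv) K
  simp only [tensorHom_id, Category.assoc] at K'
  have K2 : η_ A Aᘁ ≫ (Pmap A ((β_ A A).hom) ▷ Aᘁ) = η_ A Aᘁ ≫ (Pmap A (𝟙 (A ⊗ A)) ▷ Aᘁ) := by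
    rw [← C1 A ((β_ A A).hom), ← C1 A (𝟙 (A ⊗ A))]
    simpa only [MonoidalCategory.id_whiskerRight, Category.id_comp, Category.assoc] using K'
  have K3 := congrArg (tensorRightHomEquiv (𝟙_ C) A Aᘁ ((A ⊗ A) ⊗ Aᘁ)).symm K2
  rw [tensorRightHomEquiv_symm_coevaluation_comp_whiskerRight,
    tensorRightHomEquiv_symm_coevaluation_comp_whiskerRight] at K3
  have K4 : Pmap A ((β_ A A).hom) = Pmap A (𝟙 (A ⊗ A)) :=
    (Iso.cancel_iso_hom_left (λ_ A) _ _).mp K3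
  rw [C2, C2] at K4
  have K5 := (tensorRightHomEquiv A A Aᘁ (A ⊗ A)).injective K4
  simp only [Iso.inv_hom_id, Category.comp_id] at K5
  rw [← Category.comp_id ((β_ A A).hom), K5, Iso.hom_inv_id]
  exact K5

end UniformCloningAux

/-- In a compact closed category (a symmetric monoidal category in which every
object has a right dual with coevaluation and evaluation satisfying the triangle
identities) with uniform cloning, the twist map equals the identity:
`σ_{A,A} = 𝟙_{A⊗A}`. -/


theorem twist_eq_id_of_cloning (C : Type u) [Category.{v} C] [MonoidalCategory C]
    [SymmetricCategory C] [RightRigidCategory C] (cloning : UniformCloning C)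
    (A : C) : (β_ A A).hom = 𝟙 (A ⊗ A) := by
  exact UniformCloningAux.main cloning A
end

section
/- Let C be a compact closed category with uniform cloning Δ. Then every endomorphism is a scalar multiple of the identity: for every object A and every f : A ⟶ A, f = Tr(f) • 𝟙_A, where Tr(f) : I ⟶ I is the categorical trace of f and s • 𝟙_A := λ_A⁻¹ ≫ (s ⊗ 𝟙_A) ≫ λ_A. Consequently, for every object A, the hom-set C(A,A) is a retract of the scalar monoid C(I,I): the map s ↦ s • 𝟙_A followed by the map f ↦ Tr(f) need not be considered, but the composite C(A,A) ⟶ C(I,I) ⟶ C(A,A), f ↦ Tr(f) ↦ Tr(f) • 𝟙_A, is the identity on C(A,A). (Cloning Collapse Theorem) -/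
open CategoryTheory MonoidalCategory

universe v u

variable {C : Type u} [Category.{v} C] [MonoidalCategory C] [SymmetricCategory C]
  [RightRigidCategory C]

/-- The categorical trace of an endomorphism `f : A ⟶ A` in a compact closed
category: `Tr(f) = η_A ≫ (f ⊗ 𝟙_{Aᘁ}) ≫ σ_{A,Aᘁ} ≫ ε_A : I ⟶ I`. -/
noncomputable def catTrace {A : C} (f : A ⟶ A) : 𝟙_ C ⟶ 𝟙_ C :=
  η_ A Aᘁ ≫ (f ⊗ₘ 𝟙 Aᘁ) ≫ (β_ A Aᘁ).hom ≫ ε_ A Aᘁ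

/-- The scalar multiple `s • f` of a morphism `f : A ⟶ B` by a scalar
`s : I ⟶ I`, namely `(λ_A⁻¹ ≫ (s ⊗ 𝟙_A) ≫ λ_A) ≫ f`. -/
def scalarSmul (s : 𝟙_ C ⟶ 𝟙_ C) {A B : C} (f : A ⟶ B) : A ⟶ B :=
  ((λ_ A).inv ≫ (s ⊗ₘ 𝟙 A) ≫ (λ_ A).hom) ≫ f


namespace CloningCollapseAux
set_option linter.unusedSectionVars false

noncomputable section
variable (A : C)

def ctr : (A ⊗ Aᘁ) ⊗ (A ⊗ Aᘁ) ⟶ A ⊗ Aᘁ :=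
  (α_ A Aᘁ (A ⊗ Aᘁ)).hom ≫ A ◁ ((α_ Aᘁ A Aᘁ).inv ≫ (ε_ A Aᘁ ▷ Aᘁ) ≫ (λ_ Aᘁ).hom)

def ev' : A ⊗ Aᘁ ⟶ 𝟙_ C := (β_ A Aᘁ).hom ≫ ε_ A Aᘁ

lemma Lw : (η_ A Aᘁ ▷ (A ⊗ Aᘁ)) ≫ ctr A = (λ_ (A ⊗ Aᘁ)).hom := by
  dsimp [ctr]
  calc (η_ A Aᘁ ▷ (A ⊗ Aᘁ)) ≫ (α_ A Aᘁ (A ⊗ Aᘁ)).hom ≫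
        A ◁ ((α_ Aᘁ A Aᘁ).inv ≫ (ε_ A Aᘁ ▷ Aᘁ) ≫ (λ_ Aᘁ).hom)
      = 𝟙 _ ⊗≫ ((η_ A Aᘁ ▷ A ≫ (α_ A Aᘁ A).hom ≫ A ◁ ε_ A Aᘁ) ▷ Aᘁ) ⊗≫ 𝟙 _ := by
        coherence
    _ = 𝟙 _ ⊗≫ (((λ_ A).hom ≫ (ρ_ A).inv) ▷ Aᘁ) ⊗≫ 𝟙 _ := by
        rw [ExactPairing.evaluation_coevaluation]
    _ = (λ_ (A ⊗ Aᘁ)).hom := by coherence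

lemma Mw : ((A ⊗ Aᘁ) ◁ η_ A Aᘁ) ≫ ctr A = (ρ_ (A ⊗ Aᘁ)).hom := by
  dsimp [ctr]
  calc ((A ⊗ Aᘁ) ◁ η_ A Aᘁ) ≫ (α_ A Aᘁ (A ⊗ Aᘁ)).hom ≫
        A ◁ ((α_ Aᘁ A Aᘁ).inv ≫ (ε_ A Aᘁ ▷ Aᘁ) ≫ (λ_ Aᘁ).hom)
      = 𝟙 _ ⊗≫ (A ◁ (Aᘁ ◁ η_ A Aᘁ ≫ (α_ Aᘁ A Aᘁ).inv ≫ ε_ A Aᘁ ▷ Aᘁ)) ⊗≫ 𝟙 _ := by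
        coherence
    _ = 𝟙 _ ⊗≫ (A ◁ ((ρ_ Aᘁ).hom ≫ (λ_ Aᘁ).inv)) ⊗≫ 𝟙 _ := by
        rw [ExactPairing.coevaluation_evaluation]
    _ = (ρ_ (A ⊗ Aᘁ)).hom := by coherence

lemma Lg (g : 𝟙_ C ⟶ A ⊗ Aᘁ) : (η_ A Aᘁ ⊗ₘ g) ≫ ctr A = (λ_ (𝟙_ C)).hom ≫ g := by
  rw [tensorHom_def', Category.assoc, Lw, leftUnitor_naturality]

lemma Mg (g : 𝟙_ C ⟶ A ⊗ Aᘁ) : (g ⊗ₘ η_ A Aᘁ) ≫ ctr A = (λ_ (𝟙_ C)).hom ≫ g := by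
  rw [MonoidalCategory.tensorHom_def, Category.assoc, Mw, rightUnitor_naturality]
  congr 1; monoidal_coherence

lemma hG : A ◁ ((ev' A ▷ Aᘁ) ≫ (λ_ Aᘁ).hom)
    = (α_ A (A ⊗ Aᘁ) Aᘁ).inv ≫ ((β_ A (A ⊗ Aᘁ)).hom ▷ Aᘁ) ≫ (α_ (A ⊗ Aᘁ) A Aᘁ).hom ≫
      (ev' A ▷ (A ⊗ Aᘁ)) ≫ (λ_ (A ⊗ Aᘁ)).hom := by
  symm
  calc (α_ A (A ⊗ Aᘁ) Aᘁ).inv ≫ ((β_ A (A ⊗ Aᘁ)).hom ▷ Aᘁ) ≫ (α_ (A ⊗ Aᘁ) A Aᘁ).hom ≫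
        (ev' A ▷ (A ⊗ Aᘁ)) ≫ (λ_ (A ⊗ Aᘁ)).hom
      = 𝟙 _ ⊗≫ (((β_ A (A ⊗ Aᘁ)).hom ≫ (ev' A ▷ A)) ▷ Aᘁ) ⊗≫ 𝟙 _ := by coherence
    _ = 𝟙 _ ⊗≫ (((A ◁ ev' A) ≫ (β_ A (𝟙_ C)).hom) ▷ Aᘁ) ⊗≫ 𝟙 _ := by
        rw [BraidedCategory.braiding_naturality_right]
    _ = A ◁ ((ev' A ▷ Aᘁ) ≫ (λ_ Aᘁ).hom) := by
        rw [braiding_tensorUnit_right]; coherence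

lemma PB : ((β_ A A).hom ▷ (Aᘁ ⊗ Aᘁ)) ≫ (α_ A A (Aᘁ ⊗ Aᘁ)).hom ≫ (A ◁ (α_ A Aᘁ Aᘁ).inv) ≫
      (α_ A (A ⊗ Aᘁ) Aᘁ).inv ≫ ((β_ A (A ⊗ Aᘁ)).hom ▷ Aᘁ) ≫ (α_ (A ⊗ Aᘁ) A Aᘁ).hom
    = tensorμ A A Aᘁ Aᘁ := by
  rw [BraidedCategory.braiding_tensor_right_hom]
  calc ((β_ A A).hom ▷ (Aᘁ ⊗ Aᘁ)) ≫ (α_ A A (Aᘁ ⊗ Aᘁ)).hom ≫ (A ◁ (α_ A Aᘁ Aᘁ).inv) ≫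
        (α_ A (A ⊗ Aᘁ) Aᘁ).inv ≫
        (((α_ A A Aᘁ).inv ≫ (β_ A A).hom ▷ Aᘁ ≫ (α_ A A Aᘁ).hom ≫ A ◁ (β_ A Aᘁ).hom ≫
          (α_ A Aᘁ A).inv) ▷ Aᘁ) ≫ (α_ (A ⊗ Aᘁ) A Aᘁ).hom
      = 𝟙 _ ⊗≫ ((((β_ A A).hom ≫ (β_ A A).hom) ▷ Aᘁ) ▷ Aᘁ) ⊗≫
          ((A ◁ (β_ A Aᘁ).hom) ▷ Aᘁ) ⊗≫ 𝟙 _ := by coherence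
    _ = tensorμ A A Aᘁ Aᘁ := by
        rw [SymmetricCategory.symmetry]; dsimp [tensorμ]; coherence

lemma S2' : ((β_ A A).hom ▷ (Aᘁ ⊗ Aᘁ)) ≫ tensorμ A A Aᘁ Aᘁ ≫ ctr A
    = tensorμ A A Aᘁ Aᘁ ≫ (ev' A ▷ (A ⊗ Aᘁ)) ≫ (λ_ (A ⊗ Aᘁ)).hom := by
  calc ((β_ A A).hom ▷ (Aᘁ ⊗ Aᘁ)) ≫ tensorμ A A Aᘁ Aᘁ ≫ ctr A
      = ((β_ A A).hom ▷ (Aᘁ ⊗ Aᘁ)) ≫ (α_ A A (Aᘁ ⊗ Aᘁ)).hom ≫ (A ◁ (α_ A Aᘁ Aᘁ).inv) ≫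
          (A ◁ ((ev' A ▷ Aᘁ) ≫ (λ_ Aᘁ).hom)) := by
        dsimp [tensorμ, ctr, ev']; coherence
    _ = ((β_ A A).hom ▷ (Aᘁ ⊗ Aᘁ)) ≫ (α_ A A (Aᘁ ⊗ Aᘁ)).hom ≫ (A ◁ (α_ A Aᘁ Aᘁ).inv) ≫
          ((α_ A (A ⊗ Aᘁ) Aᘁ).inv ≫ ((β_ A (A ⊗ Aᘁ)).hom ▷ Aᘁ) ≫ (α_ (A ⊗ Aᘁ) A Aᘁ).hom ≫
           (ev' A ▷ (A ⊗ Aᘁ)) ≫ (λ_ (A ⊗ Aᘁ)).hom) := by rw [← hG]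
    _ = tensorμ A A Aᘁ Aᘁ ≫ (ev' A ▷ (A ⊗ Aᘁ)) ≫ (λ_ (A ⊗ Aᘁ)).hom := by
        rw [← PB]; simp only [Category.assoc]

def Qm : (A ⊗ Aᘁ) ⊗ (A ⊗ Aᘁ) ⟶ (A ⊗ Aᘁ) ⊗ (A ⊗ Aᘁ) :=
  tensorδ A A Aᘁ Aᘁ ≫ ((β_ A A).hom ▷ (Aᘁ ⊗ Aᘁ)) ≫ tensorμ A A Aᘁ Aᘁ

lemma scal {X : C} (s : 𝟙_ C ⟶ 𝟙_ C) (g : 𝟙_ C ⟶ X) :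
    (s ⊗ₘ g) ≫ (λ_ X).hom = (λ_ (𝟙_ C)).hom ≫ s ≫ g := by
  have h : (λ_ (𝟙_ C)).hom = (ρ_ (𝟙_ C)).hom := by monoidal_coherence
  calc (s ⊗ₘ g) ≫ (λ_ X).hom
      = (s ▷ 𝟙_ C) ≫ (𝟙_ C ◁ g) ≫ (λ_ X).hom := by rw [MonoidalCategory.tensorHom_def, Category.assoc]
    _ = (s ▷ 𝟙_ C) ≫ (λ_ (𝟙_ C)).hom ≫ g := by rw [leftUnitor_naturality]
    _ = ((s ▷ 𝟙_ C) ≫ (ρ_ (𝟙_ C)).hom) ≫ g := by rw [h, Category.assoc]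
    _ = ((ρ_ (𝟙_ C)).hom ≫ s) ≫ g := by rw [rightUnitor_naturality]
    _ = (λ_ (𝟙_ C)).hom ≫ s ≫ g := by rw [← h, Category.assoc]

lemma E (cl : UniformCloning C) : η_ A Aᘁ ≫ (cl.Δ A ⊗ₘ cl.Δ Aᘁ) ≫ tensorμ A A Aᘁ Aᘁ
    = (λ_ (𝟙_ C)).inv ≫ (η_ A Aᘁ ⊗ₘ η_ A Aᘁ) := by
  have h := cl.naturality (η_ A Aᘁ)
  rw [cl.tensor, cl.unit] at h
  simpa using h

lemma F2 (cl : UniformCloning C) : η_ A Aᘁ ≫ (cl.Δ A ⊗ₘ cl.Δ Aᘁ) ≫ ((β_ A A).hom ▷ (Aᘁ ⊗ Aᘁ))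
    = η_ A Aᘁ ≫ (cl.Δ A ⊗ₘ cl.Δ Aᘁ) := by
  rw [← tensorHom_id ((β_ A A).hom) (Aᘁ ⊗ Aᘁ), tensorHom_comp_tensorHom, cl.cocomm, Category.comp_id]

lemma StepA (cl : UniformCloning C) : (η_ A Aᘁ ⊗ₘ η_ A Aᘁ) ≫ Qm A = η_ A Aᘁ ⊗ₘ η_ A Aᘁ := by
  have e := E A cl
  have h : (η_ A Aᘁ ⊗ₘ η_ A Aᘁ)
      = (λ_ (𝟙_ C)).hom ≫ η_ A Aᘁ ≫ (cl.Δ A ⊗ₘ cl.Δ Aᘁ) ≫ tensorμ A A Aᘁ Aᘁ := by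
    rw [e]; simp
  rw [h]
  dsimp [Qm]
  slice_lhs 4 5 => rw [tensorμ_tensorδ]
  simp only [Category.id_comp, Category.assoc]
  rw [reassoc_of% (F2 A cl)]

lemma QN (f : A ⟶ A) : ((f ▷ Aᘁ) ▷ (A ⊗ Aᘁ)) ≫ Qm A = Qm A ≫ ((A ⊗ Aᘁ) ◁ (f ▷ Aᘁ)) := by
  haveI : IsIso (tensorμ A A Aᘁ Aᘁ) :=
    ⟨tensorδ A A Aᘁ Aᘁ, tensorμ_tensorδ A A Aᘁ Aᘁ, tensorδ_tensorμ A A Aᘁ Aᘁ⟩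
  have h1 : ((f ⊗ₘ 𝟙 A) ▷ (Aᘁ ⊗ Aᘁ)) ≫ tensorμ A A Aᘁ Aᘁ
      = tensorμ A A Aᘁ Aᘁ ≫ ((f ▷ Aᘁ) ▷ (A ⊗ Aᘁ)) := by
    have h := tensorμ_natural_left f (𝟙 A) Aᘁ Aᘁ
    simpa using h
  have h2 : ((𝟙 A ⊗ₘ f) ▷ (Aᘁ ⊗ Aᘁ)) ≫ tensorμ A A Aᘁ Aᘁ
      = tensorμ A A Aᘁ Aᘁ ≫ ((A ⊗ Aᘁ) ◁ (f ▷ Aᘁ)) := by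
    have h := tensorμ_natural_left (𝟙 A) f Aᘁ Aᘁ
    simpa using h
  have n1 : ((f ▷ Aᘁ) ▷ (A ⊗ Aᘁ)) ≫ tensorδ A A Aᘁ Aᘁ
      = tensorδ A A Aᘁ Aᘁ ≫ ((f ⊗ₘ 𝟙 A) ▷ (Aᘁ ⊗ Aᘁ)) := by
    rw [← cancel_mono (tensorμ A A Aᘁ Aᘁ)]
    simp only [Category.assoc, h1, tensorδ_tensorμ_assoc, tensorδ_tensorμ, Category.comp_id]
  have n2 : ((f ⊗ₘ 𝟙 A) ▷ (Aᘁ ⊗ Aᘁ)) ≫ ((β_ A A).hom ▷ (Aᘁ ⊗ Aᘁ))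
      = ((β_ A A).hom ▷ (Aᘁ ⊗ Aᘁ)) ≫ ((𝟙 A ⊗ₘ f) ▷ (Aᘁ ⊗ Aᘁ)) := by
    rw [← comp_whiskerRight, ← comp_whiskerRight, BraidedCategory.braiding_naturality]
  dsimp [Qm]
  slice_lhs 1 2 => rw [n1]
  slice_lhs 2 3 => rw [n2]
  slice_lhs 3 4 => rw [h2]
  simp only [Category.assoc]

lemma QC : Qm A ≫ ctr A = (ev' A ▷ (A ⊗ Aᘁ)) ≫ (λ_ (A ⊗ Aᘁ)).hom := by
  dsimp [Qm]
  slice_lhs 2 4 => rw [S2' A]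
  slice_lhs 1 2 => rw [tensorδ_tensorμ]
  simp

lemma MainK (cl : UniformCloning C) (f : A ⟶ A) :
    η_ A Aᘁ ≫ (f ▷ Aᘁ) = catTrace f ≫ η_ A Aᘁ := by
  have t : ((η_ A Aᘁ ≫ (f ▷ Aᘁ)) ⊗ₘ η_ A Aᘁ)
      = (η_ A Aᘁ ⊗ₘ η_ A Aᘁ) ≫ ((f ▷ Aᘁ) ▷ (A ⊗ Aᘁ)) := by
    rw [← tensorHom_id (f ▷ Aᘁ) (A ⊗ Aᘁ), tensorHom_comp_tensorHom, Category.comp_id]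
  have t2 : (η_ A Aᘁ ⊗ₘ η_ A Aᘁ) ≫ ((A ⊗ Aᘁ) ◁ (f ▷ Aᘁ))
      = (η_ A Aᘁ ⊗ₘ (η_ A Aᘁ ≫ (f ▷ Aᘁ))) := by
    rw [← id_tensorHom (A ⊗ Aᘁ) (f ▷ Aᘁ), tensorHom_comp_tensorHom, Category.comp_id]
  have way1 : ((η_ A Aᘁ ≫ (f ▷ Aᘁ)) ⊗ₘ η_ A Aᘁ) ≫ Qm A ≫ ctr A
      = (λ_ (𝟙_ C)).hom ≫ η_ A Aᘁ ≫ (f ▷ Aᘁ) := by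
    rw [t]
    simp only [Category.assoc]
    rw [reassoc_of% (QN A f), reassoc_of% (StepA A cl), ← Category.assoc, t2,
      Lg A (η_ A Aᘁ ≫ (f ▷ Aᘁ))]
  have way2 : ((η_ A Aᘁ ≫ (f ▷ Aᘁ)) ⊗ₘ η_ A Aᘁ) ≫ Qm A ≫ ctr A
      = (λ_ (𝟙_ C)).hom ≫ catTrace f ≫ η_ A Aᘁ := by
    rw [QC]
    have t3 : ((η_ A Aᘁ ≫ (f ▷ Aᘁ)) ⊗ₘ η_ A Aᘁ) ≫ (ev' A ▷ (A ⊗ Aᘁ))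
        = (catTrace f ⊗ₘ η_ A Aᘁ) := by
      rw [← tensorHom_id (ev' A) (A ⊗ Aᘁ), tensorHom_comp_tensorHom, Category.comp_id]
      congr 1
      dsimp [ev', catTrace]
      simp [tensorHom_id]
    rw [← Category.assoc, t3, scal]
  rw [← cancel_epi (λ_ (𝟙_ C)).hom, ← way1, way2]


end
end CloningCollapseAux

/-- **Cloning Collapse Theorem.** In a compact closed category with uniform
cloning, every endomorphism is a scalar multiple of the identity:
`f = Tr(f) • 𝟙_A`.  Consequently the composite
`C(A,A) ⟶ C(I,I) ⟶ C(A,A)`, `f ↦ Tr(f) ↦ Tr(f) • 𝟙_A`, is the identity on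
`C(A,A)`, exhibiting `C(A,A)` as a retract of the scalar monoid `C(I,I)`. -/
theorem cloning_collapse (cloning : UniformCloning C) {A : C} (f : A ⟶ A) :
    f = scalarSmul (catTrace f) (𝟙 A) := by
  have h1 : (λ_ A).inv ≫ ((η_ A Aᘁ ≫ (f ▷ Aᘁ)) ▷ A) ≫ (α_ A Aᘁ A).hom ≫
      (A ◁ ε_ A Aᘁ) ≫ (ρ_ A).hom = f := by
    rw [comp_whiskerRight]
    simp only [Category.assoc]
    rw [associator_naturality_left_assoc, ← whisker_exchange_assoc,
      rightUnitor_naturality]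
    simp
  have h2 : (λ_ A).inv ≫ ((catTrace f ≫ η_ A Aᘁ) ▷ A) ≫ (α_ A Aᘁ A).hom ≫
      (A ◁ ε_ A Aᘁ) ≫ (ρ_ A).hom = scalarSmul (catTrace f) (𝟙 A) := by
    rw [comp_whiskerRight]
    simp only [Category.assoc]
    rw [ExactPairing.evaluation_coevaluation_assoc]
    dsimp [scalarSmul]
    simp [tensorHom_id]
  conv_lhs => rw [← h1]
  rw [CloningCollapseAux.MainK A cloning f, h2]
end

section
/- Let C be a compact closed category with uniform deleting, i.e. a monoidal natural transformation d from the identity functor to the constant functor at the tensor unit I, with components d_A : A ⟶ I satisfying naturality (f ≫ d_B = d_A for every f : A ⟶ B), d_I = 𝟙_I, and d_{A⊗B} = (d_A ⊗ d_B) ≫ λ_I (equivalently, modulo the unitor, d_{A⊗B} = d_A ⊗ d_B followed by the canonical isomorphism I ⊗ I ≅ I). Then C is a preorder: for all objects A, B and all f, g : A ⟶ B, f = g. (No-Deleting) -/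
open CategoryTheory MonoidalCategory

universe v u

/-- **No-Deleting.** A compact closed category (a symmetric monoidal category in
which every object has a right dual with coevaluation and evaluation satisfying
the triangle identities) with a uniform deleting operation — a monoidal natural
transformation `d` from the identity functor to the constant functor at the
tensor unit, i.e. components `d_A : A ⟶ I` with `f ≫ d_B = d_A` for every
`f : A ⟶ B`, `d_I = 𝟙_I` and `d_{A⊗B} = (d_A ⊗ d_B) ≫ λ_I` — is a preorder:
any two parallel morphisms are equal. -/
theorem no_deleting (C : Type u) [Category.{v} C] [MonoidalCategory C]
    [SymmetricCategory C] [RightRigidCategory C]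
    (d : ∀ A : C, A ⟶ 𝟙_ C)
    (d_nat : ∀ {A B : C} (f : A ⟶ B), f ≫ d B = d A)
    (d_unit : d (𝟙_ C) = 𝟙 (𝟙_ C))
    (d_tensor : ∀ A B : C, d (A ⊗ B) = (d A ⊗ₘ d B) ≫ (λ_ (𝟙_ C)).hom)
    {A B : C} (f g : A ⟶ B) : f = g := by
  -- Every morphism into the unit is equal to the deleting map.
  have hterm : ∀ {Y : C} (h h' : Y ⟶ 𝟙_ C), h = h' := by
    intro Y h h'
    have e : ∀ h : Y ⟶ 𝟙_ C, h = d Y := fun h => by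
      rw [← d_nat h, d_unit, Category.comp_id]
    rw [e h, e h']
  -- Hom(I, X) is a subsingleton via the duality equivalence.
  have hpoint : ∀ (X : C) (h h' : 𝟙_ C ⟶ X), h = h' := by
    intro X h h'
    have := congrArg (fun t => (tensorLeftHomEquiv (𝟙_ C) X Xᘁ (𝟙_ C)) t)
      (hterm ((tensorLeftHomEquiv (𝟙_ C) X Xᘁ (𝟙_ C)).symm (h ≫ (ρ_ X).inv))
             ((tensorLeftHomEquiv (𝟙_ C) X Xᘁ (𝟙_ C)).symm (h' ≫ (ρ_ X).inv)))
    simpa using this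
  have := congrArg (fun t => (tensorRightHomEquiv (𝟙_ C) A Aᘁ B).symm t)
    (hpoint (B ⊗ Aᘁ) ((tensorRightHomEquiv (𝟙_ C) A Aᘁ B) ((λ_ A).hom ≫ f))
                     ((tensorRightHomEquiv (𝟙_ C) A Aᘁ B) ((λ_ A).hom ≫ g)))
  simp only [Equiv.symm_apply_apply] at this
  exact (Iso.cancel_iso_hom_left (λ_ A) f g).mp this
end
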